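/- arXiv:1904.07534 — 2 statements merged into one kernel-verified Lean document; each statement's English description precedes it below -/
import Mathlib

section
/- There is no internal category structure on the naive separated product of nF with itself: there do not exist a composition operation comp on the set of pairs ((f,g),(f',g')) with f,g having disjoint domains and codomains, f',g' having disjoint domains and codomains, and cod(f)=dom(f'), cod(g)=dom(g'), such that comp lands in nF₁ ∗ nF₁ and satisfies dom(comp) = (dom f, dom g) and cod(comp) = (cod f', cod g'). Concretely: for distinct names a,b,c,d, the pair ((δ_{ac}, δ_{bd}), (δ_{cb}, δ_{da})) is composable componentwise, but the componentwise composites (δ_{ab}, δ_{ba}) do not have disjoint supports, hence do not lie in nF₁ ∗ nF₁. -/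
/-- The set of names. -/
abbrev Name := ℕ

/-- A set with an action of the group of (finite) permutations of names. -/
structure PermSet where
  α : Type
  act : Equiv.Perm Name → α → α
  act_one : ∀ x, act 1 x = x
  act_mul : ∀ π σ x, act (π * σ) x = act π (act σ x)

/-- `S` supports `x`. -/
def PermSet.IsSupp (X : PermSet) (S : Set Name) (x : X.α) : Prop :=
  ∀ π : Equiv.Perm Name, (∀ a ∈ S, π a = a) → X.act π x = x

/-- `x` is finitely supported. -/
def PermSet.FinSupp (X : PermSet) (x : X.α) : Prop :=
  ∃ S : Finset Name, X.IsSupp ↑S x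

/-- A nominal set: every element is finitely supported. -/
def PermSet.Nominal (X : PermSet) : Prop := ∀ x, X.FinSupp x

/-- The least support of `x` (intersection of all finite supports). -/
def PermSet.supp (X : PermSet) (x : X.α) : Set Name :=
  ⋂₀ {S : Set Name | S.Finite ∧ X.IsSupp S x}


/-- A morphism of the category `nF`: a function `f : A → B` between finite subsets of `𝒩`,
represented by a total function that is the identity outside `A`. -/
structure nFMor where
  dom : Finset Name
  cod : Finset Name
  f : Name → Name
  maps : ∀ a ∈ dom, f a ∈ cod
  ext0 : ∀ a ∉ dom, f a = a

theorem nFMor.ext2 {m n : nFMor} (h1 : m.dom = n.dom) (h2 : m.cod = n.cod)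
    (h3 : m.f = n.f) : m = n := by
  cases m; cases n; simp_all

/-- The nominal set of objects of `nF`: finite subsets of `𝒩` with `π·A = π[A]`. -/
def objPS : PermSet where
  α := Finset Name
  act π A := A.image π
  act_one A := by simp
  act_mul π σ A := by
    show A.image _ = (A.image _).image _
    rw [Finset.image_image]
    rfl

/-- The nominal set of morphisms of `nF`, with `π·f = π_B ∘ f ∘ (π_A)⁻¹`. -/
def morPS : PermSet where
  α := nFMor
  act π m :=
    { dom := m.dom.image π
      cod := m.cod.image π
      f := π ∘ m.f ∘ π.symm
      maps := by
        intro a ha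
        simp only [Finset.mem_image] at ha ⊢
        obtain ⟨b, hb, rfl⟩ := ha
        exact ⟨m.f b, m.maps b hb, by simp⟩
      ext0 := by
        intro a ha
        have h : π.symm a ∉ m.dom := by
          intro h
          exact ha (Finset.mem_image.mpr ⟨π.symm a, h, by simp⟩)
        simp [m.ext0 _ h] }
  act_one m := by
    apply nFMor.ext2 <;> simp <;> rfl
  act_mul π σ m := by
    apply nFMor.ext2 <;>
      simp [Finset.image_image, Function.comp_def, Equiv.Perm.mul_apply,
        Equiv.Perm.mul_def, Equiv.symm_trans_apply]

/-- Composition in `nF` (in diagrammatic order: first `m`, then `n`). -/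
def nFComp (m n : nFMor) (h : m.cod = n.dom) : nFMor where
  dom := m.dom
  cod := n.cod
  f := fun a => if a ∈ m.dom then n.f (m.f a) else a
  maps := by
    intro a ha
    simp only [if_pos ha]
    exact n.maps _ (h ▸ m.maps a ha)
  ext0 := by intro a ha; simp [ha]

/-- `δ_{x y}`: the unique function `{x} → {y}`. -/
def delta (x y : Name) : nFMor where
  dom := {x}
  cod := {y}
  f := fun a => if a = x then y else a
  maps := by intro a ha; simp_all
  ext0 := by intro a ha; simp_all

lemma delta_isSupp (x y : Name) : morPS.IsSupp {x, y} (delta x y) := by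
  intro π hπ
  have hx : π x = x := hπ x (by simp)
  have hy : π y = y := hπ y (by simp)
  have hsx : π.symm x = x := by
    conv_lhs => rw [← hx]
    simp
  apply nFMor.ext2
  · show ({x} : Finset Name).image π = {x}
    simp [hx]
  · show ({y} : Finset Name).image π = {y}
    simp [hy]
  · funext z
    show π ((delta x y).f (π.symm z)) = (delta x y).f z
    by_cases hz : z = x
    · subst hz
      simp [delta, hsx, hy]
    · have : π.symm z ≠ x := by
        intro h
        apply hz
        rw [← hsx] at h
        exact π.symm.injective h
      simp [delta, this, hz]

lemma supp_delta_subset (x y : Name) : morPS.supp (delta x y) ⊆ {x, y} :=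
  Set.sInter_subset_of_mem ⟨(Set.finite_singleton y).insert x, delta_isSupp x y⟩

lemma mem_supp_of_mem_cod (m : nFMor) {y : Name} (hy : y ∈ m.cod) :
    y ∈ morPS.supp m := by
  show y ∈ ⋂₀ {S : Set Name | S.Finite ∧ morPS.IsSupp S m}
  rw [Set.mem_sInter]
  rintro S ⟨hSfin, hSsupp⟩
  by_contra hyS
  obtain ⟨e, he⟩ := ((hSfin.union m.cod.finite_toSet).union m.dom.finite_toSet).infinite_compl.nonempty
  simp only [Set.mem_compl_iff, Set.mem_union, Finset.mem_coe, not_or] at he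
  obtain ⟨⟨heS, hec⟩, -⟩ := he
  have hey : e ≠ y := fun h => hec (h ▸ hy)
  set π := Equiv.swap y e with hπ
  have hfix : ∀ z ∈ S, π z = z := by
    intro z hz
    exact Equiv.swap_apply_of_ne_of_ne (fun h => hyS (h ▸ hz)) (fun h => heS (h ▸ hz))
  have hact := hSsupp π hfix
  have hcod : m.cod.image π = m.cod := congrArg nFMor.cod hact
  apply hec
  rw [← hcod]
  exact Finset.mem_image.mpr ⟨y, hy, Equiv.swap_apply_left y e⟩

lemma mem_supp_of_mem_dom (m : nFMor) {y : Name} (hy : y ∈ m.dom) :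
    y ∈ morPS.supp m := by
  show y ∈ ⋂₀ {S : Set Name | S.Finite ∧ morPS.IsSupp S m}
  rw [Set.mem_sInter]
  rintro S ⟨hSfin, hSsupp⟩
  by_contra hyS
  obtain ⟨e, he⟩ := ((hSfin.union m.cod.finite_toSet).union m.dom.finite_toSet).infinite_compl.nonempty
  simp only [Set.mem_compl_iff, Set.mem_union, Finset.mem_coe, not_or] at he
  obtain ⟨⟨heS, -⟩, hed⟩ := he
  set π := Equiv.swap y e with hπ
  have hfix : ∀ z ∈ S, π z = z := by
    intro z hz
    exact Equiv.swap_apply_of_ne_of_ne (fun h => hyS (h ▸ hz)) (fun h => heS (h ▸ hz))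
  have hact := hSsupp π hfix
  have hdom : m.dom.image π = m.dom := congrArg nFMor.dom hact
  apply hed
  rw [← hdom]
  exact Finset.mem_image.mpr ⟨y, hy, Equiv.swap_apply_left y e⟩

lemma supp_disj {x y z w : Name} (h1 : x ≠ z) (h2 : x ≠ w) (h3 : y ≠ z) (h4 : y ≠ w) :
    morPS.supp (delta x y) ∩ morPS.supp (delta z w) = ∅ := by
  apply Set.eq_empty_of_forall_notMem
  rintro u ⟨hu1, hu2⟩
  have := supp_delta_subset x y hu1
  have := supp_delta_subset z w hu2
  simp only [Set.mem_insert_iff, Set.mem_singleton_iff] at *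
  rcases ‹u = x ∨ u = y› with rfl | rfl <;> rcases ‹u = z ∨ u = w› with h | h <;> tauto

lemma comp_delta {x y z : Name} (hxy : x ≠ y) :
    nFComp (delta x y) (delta y z) rfl = delta x z := by
  apply nFMor.ext2
  · rfl
  · rfl
  · funext u
    show (if u ∈ ({x} : Finset Name) then (delta y z).f ((delta x y).f u) else u)
        = (delta x z).f u
    by_cases hu : u = x
    · subst hu; simp [delta]
    · simp [delta, hu]

/-- the naive separated product `nF₁ ∗ nF₁` carries no internal composition:
the pair `((δ_{ac}, δ_{bd}), (δ_{cb}, δ_{da}))` lies componentwise in `nF₁ ∗ nF₁` and is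
componentwise composable, but the componentwise composites `(δ_{ab}, δ_{ba})` do not have
disjoint supports; indeed there is no pair in `nF₁ ∗ nF₁` at all with the required domains
and codomains, so no composition `comp` with `dom (comp) = (dom f, dom g)` and
`cod (comp) = (cod f', cod g')` can land in `nF₁ ∗ nF₁`. -/
theorem stmt9 (a b c d : Name) (hab : a ≠ b) (hac : a ≠ c) (had : a ≠ d)
    (hbc : b ≠ c) (hbd : b ≠ d) (hcd : c ≠ d) :
    morPS.supp (delta a c) ∩ morPS.supp (delta b d) = ∅ ∧
    morPS.supp (delta c b) ∩ morPS.supp (delta d a) = ∅ ∧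
    (delta a c).cod = (delta c b).dom ∧
    (delta b d).cod = (delta d a).dom ∧
    nFComp (delta a c) (delta c b) rfl = delta a b ∧
    nFComp (delta b d) (delta d a) rfl = delta b a ∧
    ¬(morPS.supp (delta a b) ∩ morPS.supp (delta b a) = ∅) ∧
    ¬∃ p : nFMor × nFMor,
        morPS.supp p.1 ∩ morPS.supp p.2 = ∅ ∧
        p.1.dom = {a} ∧ p.1.cod = {b} ∧ p.2.dom = {b} ∧ p.2.cod = {a} := by
  refine ⟨supp_disj hab had hbc.symm hcd, supp_disj hcd hac.symm hbd hab.symm,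
    rfl, rfl, comp_delta hac, comp_delta hbd, ?_, ?_⟩
  · intro h
    have hb1 : b ∈ morPS.supp (delta a b) := mem_supp_of_mem_cod _ (by simp [delta])
    have hb2 : b ∈ morPS.supp (delta b a) := mem_supp_of_mem_dom _ (by simp [delta])
    exact absurd h (Set.nonempty_iff_ne_empty.mp ⟨b, hb1, hb2⟩)
  · rintro ⟨p, hdisj, hd1, hc1, hd2, hc2⟩
    have hb1 : b ∈ morPS.supp p.1 := mem_supp_of_mem_cod _ (by simp [hc1])
    have hb2 : b ∈ morPS.supp p.2 := mem_supp_of_mem_dom _ (by simp [hd2])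
    exact absurd hdisj (Set.nonempty_iff_ne_empty.mp ⟨b, hb1, hb2⟩)
end

section
/- In NOM(S), commutativity of ⊎ together with the defining equations implies that naturality of symmetries in S is respected: for t : m → n in a PROP S and any z, [a^m + a^z⟩ (t ⊕ id_z);σ_{n,z} ⟨b^z + b^n] = [a^m + a^z⟩ σ_{m,z};(id_z ⊕ t) ⟨b^z + b^n] holds in NOM(S). -/
/-- The block-swap permutation of `Fin (m + n)`, exchanging the first `m` with the last `n`. -/
def blockSwap (m n : ℕ) : Equiv.Perm (Fin (m + n)) :=
  (finAddFlip : Fin (m + n) ≃ Fin (n + m)).trans (finCongr (Nat.add_comm n m))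

/-- A `PROP` (in the sense of MacLane): a symmetric strict monoidal category with natural
numbers as objects and addition as tensor, presented single-sortedly with total operations
and composability side conditions.  `prm n e` is the symmetry (bijection) arrow induced by a
permutation of `Fin n`; `sym m n := prm (m+n) (blockSwap m n)` is the block symmetry.
Composition `comp` is in diagrammatic order. -/
structure PROP where
  Arr : Type
  dom : Arr → ℕ
  cod : Arr → ℕ
  id : ℕ → Arr
  comp : Arr → Arr → Arr
  tens : Arr → Arr → Arr
  prm : (n : ℕ) → Equiv.Perm (Fin n) → Arr
  dom_id : ∀ n, dom (id n) = n
  cod_id : ∀ n, cod (id n) = n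
  dom_comp : ∀ f g, cod f = dom g → dom (comp f g) = dom f
  cod_comp : ∀ f g, cod f = dom g → cod (comp f g) = cod g
  dom_tens : ∀ f g, dom (tens f g) = dom f + dom g
  cod_tens : ∀ f g, cod (tens f g) = cod f + cod g
  dom_prm : ∀ n e, dom (prm n e) = n
  cod_prm : ∀ n e, cod (prm n e) = n
  id_comp : ∀ f, comp (id (dom f)) f = f
  comp_id : ∀ f, comp f (id (cod f)) = f
  comp_assoc : ∀ f g h, cod f = dom g → cod g = dom h →
      comp (comp f g) h = comp f (comp g h)
  id_tens_zero : ∀ f, tens (id 0) f = f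
  tens_id_zero : ∀ f, tens f (id 0) = f
  tens_assoc : ∀ f g h, tens (tens f g) h = tens f (tens g h)
  tens_id : ∀ m n, tens (id m) (id n) = id (m + n)
  interchange : ∀ f g f' g', cod f = dom g → cod f' = dom g' →
      tens (comp f g) (comp f' g') = comp (tens f f') (tens g g')
  prm_one : ∀ n, prm n 1 = id n
  prm_mul : ∀ n (e e' : Equiv.Perm (Fin n)), comp (prm n e) (prm n e') = prm n (e' * e)
  prm_natural : ∀ f z, comp (tens f (id z)) (prm (cod f + z) (blockSwap (cod f) z)) =
      comp (prm (dom f + z) (blockSwap (dom f) z)) (tens (id z) f)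

/-- The block symmetry `σ_{m,n}` of a `PROP`. -/
def PROP.sym (S : PROP) (m n : ℕ) : S.Arr := S.prm (m + n) (blockSwap m n)

/-- A morphism of `PROP`s: an identity-on-objects strict symmetric monoidal functor. -/
structure PROPMor (S T : PROP) where
  f : S.Arr → T.Arr
  map_dom : ∀ x, T.dom (f x) = S.dom x
  map_cod : ∀ x, T.cod (f x) = S.cod x
  map_id : ∀ n, f (S.id n) = T.id n
  map_comp : ∀ x y, S.cod x = S.dom y → f (S.comp x y) = T.comp (f x) (f y)
  map_tens : ∀ x y, f (S.tens x y) = T.tens (f x) (f y)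
  map_prm : ∀ n e, f (S.prm n e) = T.prm n e

/-- A nominal PROP: a strict monoidal category internal in nominal sets, with finite subsets
of `𝒩` as objects, all renaming bijections `π_A : A → π[A]`, an equivariant structure, and a
partial commutative tensor `⊎` (meaningful on arrows with disjoint domains and disjoint
codomains).  Composition `comp` is in diagrammatic order. -/
structure NPROP where
  Arr : Type
  dom : Arr → Finset Name
  cod : Arr → Finset Name
  id : Finset Name → Arr
  comp : Arr → Arr → Arr
  tens : Arr → Arr → Arr
  ren : Equiv.Perm Name → Finset Name → Arr
  act : Equiv.Perm Name → Arr → Arr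
  dom_id : ∀ A, dom (id A) = A
  cod_id : ∀ A, cod (id A) = A
  dom_comp : ∀ f g, cod f = dom g → dom (comp f g) = dom f
  cod_comp : ∀ f g, cod f = dom g → cod (comp f g) = cod g
  dom_tens : ∀ f g, dom f ∩ dom g = ∅ → cod f ∩ cod g = ∅ →
      dom (tens f g) = dom f ∪ dom g
  cod_tens : ∀ f g, dom f ∩ dom g = ∅ → cod f ∩ cod g = ∅ →
      cod (tens f g) = cod f ∪ cod g
  dom_ren : ∀ π A, dom (ren π A) = A
  cod_ren : ∀ π A, cod (ren π A) = A.image π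
  id_comp : ∀ f, comp (id (dom f)) f = f
  comp_id : ∀ f, comp f (id (cod f)) = f
  comp_assoc : ∀ f g h, cod f = dom g → cod g = dom h →
      comp (comp f g) h = comp f (comp g h)
  id_tens_empty : ∀ f, tens (id ∅) f = f
  tens_id_empty : ∀ f, tens f (id ∅) = f
  tens_assoc : ∀ f g h, tens (tens f g) h = tens f (tens g h)
  tens_comm : ∀ f g, dom f ∩ dom g = ∅ → cod f ∩ cod g = ∅ → tens f g = tens g f
  tens_id : ∀ A B, A ∩ B = ∅ → tens (id A) (id B) = id (A ∪ B)
  interchange : ∀ f g f' g', cod f = dom g → cod f' = dom g' →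
      dom f ∩ dom f' = ∅ → cod f ∩ cod f' = ∅ → cod g ∩ cod g' = ∅ →
      tens (comp f g) (comp f' g') = comp (tens f f') (tens g g')
  ren_one : ∀ A, ren 1 A = id A
  ren_ren : ∀ π σ A, comp (ren π A) (ren σ (A.image π)) = ren (σ * π) A
  ren_tens : ∀ π A B, A ∩ B = ∅ → tens (ren π A) (ren π B) = ren π (A ∪ B)
  act_def : ∀ π f, act π f =
      comp (ren π.symm ((dom f).image π)) (comp f (ren π (cod f)))
  act_id : ∀ π A, act π (id A) = id (A.image π)
  act_comp : ∀ π f g, cod f = dom g → act π (comp f g) = comp (act π f) (act π g)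
  act_tens : ∀ π f g, dom f ∩ dom g = ∅ → cod f ∩ cod g = ∅ →
      act π (tens f g) = tens (act π f) (act π g)

/-- A morphism of nominal PROPs: an identity-on-objects strict monoidal equivariant functor. -/
structure NPROPMor (T U : NPROP) where
  f : T.Arr → U.Arr
  map_dom : ∀ x, U.dom (f x) = T.dom x
  map_cod : ∀ x, U.cod (f x) = T.cod x
  map_id : ∀ A, f (T.id A) = U.id A
  map_comp : ∀ x y, T.cod x = T.dom y → f (T.comp x y) = U.comp (f x) (f y)
  map_tens : ∀ x y, T.dom x ∩ T.dom y = ∅ → T.cod x ∩ T.cod y = ∅ →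
      f (T.tens x y) = U.tens (f x) (f y)
  map_ren : ∀ π A, f (T.ren π A) = U.ren π A
  map_act : ∀ π x, f (T.act π x) = U.act π (f x)

/-- Terms of the nominal PROP `NOM(S)` presented by generators `[a⟩ f ⟨b]` (`box a f b`) for
arrows `f : n → m` of the PROP `S` and lists `a`, `b` of distinct names of lengths `n`, `m`,
together with identities `id_A`, renamings `[a|b] = ⊎ δ_{aᵢbᵢ}` (`rn a b`), composition and
tensor. -/
inductive NTm (S : PROP) : Type
  | box : List Name → S.Arr → List Name → NTm S
  | rn : List Name → List Name → NTm S
  | idA : Finset Name → NTm S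
  | comp : NTm S → NTm S → NTm S
  | tens : NTm S → NTm S → NTm S

/-- Domain (a finite set of names) of a term of `NOM(S)`. -/
def ntdom {S : PROP} : NTm S → Finset Name
  | .box a _ _ => a.toFinset
  | .rn a _ => a.toFinset
  | .idA A => A
  | .comp x _ => ntdom x
  | .tens x y => ntdom x ∪ ntdom y

/-- Codomain of a term of `NOM(S)`. -/
def ntcod {S : PROP} : NTm S → Finset Name
  | .box _ _ b => b.toFinset
  | .rn _ b => b.toFinset
  | .idA A => A
  | .comp _ y => ntcod y
  | .tens x y => ntcod x ∪ ntcod y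

/-- The permutation action on terms of `NOM(S)`. -/
def nact {S : PROP} (π : Equiv.Perm Name) : NTm S → NTm S
  | .box a f b => .box (a.map π) f (b.map π)
  | .rn a b => .rn (a.map π) (b.map π)
  | .idA A => .idA (A.image π)
  | .comp x y => .comp (nact π x) (nact π y)
  | .tens x y => .tens (nact π x) (nact π y)

/-- The equations presenting the nominal PROP `NOM(S)`: the laws of an internal strict
monoidal category (with a commutative partial tensor), the renaming laws, and the five
defining equations of `NOM`. -/
inductive NRel (S : PROP) : NTm S → NTm S → Prop
  | refl (x : NTm S) : NRel S x x
  | symm {x y : NTm S} : NRel S x y → NRel S y x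
  | trans {x y z : NTm S} : NRel S x y → NRel S y z → NRel S x z
  | comp_congr {x x' y y' : NTm S} : NRel S x x' → NRel S y y' →
      NRel S (.comp x y) (.comp x' y')
  | tens_congr {x x' y y' : NTm S} : NRel S x x' → NRel S y y' →
      NRel S (.tens x y) (.tens x' y')
  | act_congr (π : Equiv.Perm Name) {x y : NTm S} : NRel S x y →
      NRel S (nact π x) (nact π y)
  | id_comp (x : NTm S) : NRel S (.comp (.idA (ntdom x)) x) x
  | comp_id (x : NTm S) : NRel S (.comp x (.idA (ntcod x))) x
  | comp_assoc (x y z : NTm S) : NRel S (.comp (.comp x y) z) (.comp x (.comp y z))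
  | id_tens_empty (x : NTm S) : NRel S (.tens (.idA ∅) x) x
  | tens_id_empty (x : NTm S) : NRel S (.tens x (.idA ∅)) x
  | tens_assoc (x y z : NTm S) : NRel S (.tens (.tens x y) z) (.tens x (.tens y z))
  | tens_comm (x y : NTm S) : NRel S (.tens x y) (.tens y x)
  | tens_id (A B : Finset Name) : A ∩ B = ∅ →
      NRel S (.tens (.idA A) (.idA B)) (.idA (A ∪ B))
  | interchange (x y x' y' : NTm S) :
      ntcod x = ntdom y → ntcod x' = ntdom y' →
      NRel S (.tens (.comp x y) (.comp x' y')) (.comp (.tens x x') (.tens y y'))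
  | rn_id (a : List Name) : NRel S (.rn a a) (.idA a.toFinset)
  | rn_comp (a b c : List Name) : b.Nodup → a.length = b.length →
      b.length = c.length → NRel S (.comp (.rn a b) (.rn b c)) (.rn a c)
  | rn_tens (a b a' b' : List Name) :
      NRel S (.tens (.rn a b) (.rn a' b')) (.rn (a ++ a') (b ++ b'))
  -- the five defining equations of NOM(S):
  | nom_comp (a b c : List Name) (f g : S.Arr) :
      a.Nodup → b.Nodup → c.Nodup →
      a.length = S.dom f → b.length = S.cod f →
      b.length = S.dom g → c.length = S.cod g →
      NRel S (.box a (S.comp f g) c) (.comp (.box a f b) (.box b g c))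
  | nom_tens (af bf ag bg : List Name) (f g : S.Arr) :
      (af ++ ag).Nodup → (bf ++ bg).Nodup →
      af.length = S.dom f → bf.length = S.cod f →
      ag.length = S.dom g → bg.length = S.cod g →
      NRel S (.box (af ++ ag) (S.tens f g) (bf ++ bg))
             (.tens (.box af f bf) (.box ag g bg))
  | nom_id (a b : List Name) (n : ℕ) : a.Nodup → b.Nodup →
      a.length = n → b.length = n →
      NRel S (.box a (S.id n) b) (.rn a b)
  | nom_prm_left (a b b' c : List Name) (n : ℕ) (e : Equiv.Perm (Fin n)) (f : S.Arr)
      (hb : b.length = n) (hb' : b'.length = n) :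
      a.Nodup → b.Nodup → b'.Nodup → c.Nodup →
      a.length = n → b.toFinset = b'.toFinset →
      (∀ i : Fin n, b.get (i.cast hb.symm) = b'.get ((e i).cast hb'.symm)) →
      n = S.dom f → c.length = S.cod f →
      NRel S (.box a (S.comp (S.prm n e) f) c)
             (.comp (.rn a b) (.box b' f c))
  | nom_prm_right (a b b' c : List Name) (n : ℕ) (e : Equiv.Perm (Fin n)) (f : S.Arr)
      (hb : b.length = n) (hb' : b'.length = n) :
      a.Nodup → b.Nodup → b'.Nodup → c.Nodup →
      a.length = S.dom f → n = S.cod f → c.length = n →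
      b.toFinset = b'.toFinset →
      (∀ i : Fin n, b.get (i.cast hb.symm) = b'.get ((e i).cast hb'.symm)) →
      NRel S (.box a (S.comp f (S.prm n e)) c)
             (.comp (.box a f b) (.rn b' c))

lemma blockSwap_val (p q : ℕ) (i : Fin (p + q)) :
    (blockSwap p q i : ℕ) = if (i : ℕ) < p then q + i else (i : ℕ) - p := by
  rcases i with ⟨iv, hiv⟩
  by_cases h : iv < p
  · simp [blockSwap, finAddFlip_apply_mk_left h, h]
  · simp [blockSwap, finAddFlip_apply_mk_right (Nat.le_of_not_lt h) hiv, h]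

lemma blockSwap_get {α : Type*} (u v : List α) (p q : ℕ) (hu : u.length = p)
    (hv : v.length = q) (hb : (u ++ v).length = p + q) (hb' : (v ++ u).length = p + q)
    (i : Fin (p + q)) :
    (u ++ v).get (i.cast hb.symm) = (v ++ u).get ((blockSwap p q i).cast hb'.symm) := by
  simp only [List.get_eq_getElem, Fin.coe_cast, blockSwap_val]
  by_cases h : (i : ℕ) < p
  · simp only [h, if_pos]
    rw [List.getElem_append_left (by omega), List.getElem_append_right (by omega)]
    congr 1; omega
  · simp only [h, if_neg, if_false]
    rw [List.getElem_append_right (by omega), List.getElem_append_left (by omega)]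
    congr 1; omega

/-- in `NOM(S)`, commutativity of `⊎` together with the defining equations
implies that naturality of symmetries in `S` is respected: for `t : m → n` in `S` and any
`z`, `[a^m + a^z⟩ (t ⊕ id_z);σ_{n,z} ⟨b^z + b^n] = [a^m + a^z⟩ σ_{m,z};(id_z ⊕ t) ⟨b^z + b^n]`
holds in `NOM(S)`. -/
theorem stmt14 (S : PROP) (t : S.Arr) (m n z : ℕ) (hd : S.dom t = m) (hc : S.cod t = n)
    (am az bz bn : List Name)
    (h1 : am.length = m) (h2 : az.length = z) (h3 : bz.length = z) (h4 : bn.length = n)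
    (hnd1 : (am ++ az).Nodup) (hnd2 : (bz ++ bn).Nodup) :
    NRel S
      (.box (am ++ az) (S.comp (S.tens t (S.id z)) (S.sym n z)) (bz ++ bn))
      (.box (am ++ az) (S.comp (S.sym m z) (S.tens (S.id z) t)) (bz ++ bn)) := by
  have hndbn : (bn ++ bz).Nodup := List.perm_append_comm.nodup hnd2
  have hndza : (az ++ am).Nodup := List.perm_append_comm.nodup hnd1
  have hfbn : (bn ++ bz).toFinset = (bz ++ bn).toFinset := by
    simp [List.toFinset_append, Finset.union_comm]
  have hfa : (am ++ az).toFinset = (az ++ am).toFinset := by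
    simp [List.toFinset_append, Finset.union_comm]
  have hb1 : (bn ++ bz).length = n + z := by
    simp only [List.length_append, h3, h4]
  have hb2 : (bz ++ bn).length = n + z := by
    simp only [List.length_append, h3, h4]; omega
  have ha1 : (am ++ az).length = m + z := by
    simp only [List.length_append, h1, h2]
  have ha2 : (az ++ am).length = m + z := by
    simp only [List.length_append, h1, h2]; omega
  -- Step A : peel the symmetry off the left-hand side
  have stepA : NRel S
      (.box (am ++ az) (S.comp (S.tens t (S.id z)) (S.sym n z)) (bz ++ bn))
      (.comp (.box (am ++ az) (S.tens t (S.id z)) (bn ++ bz)) (.rn (bz ++ bn) (bz ++ bn))) := by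
    unfold PROP.sym
    exact NRel.nom_prm_right (am ++ az) (bn ++ bz) (bz ++ bn) (bz ++ bn)
      (n + z) (blockSwap n z) (S.tens t (S.id z)) hb1 hb2
      hnd1 hndbn hnd2 hnd2
      (by rw [S.dom_tens, S.dom_id, hd]; exact ha1)
      (by rw [S.cod_tens, S.cod_id, hc])
      hb2 hfbn
      (fun i => blockSwap_get bn bz n z h4 h3 hb1 hb2 i)
  -- simplify the renaming to an identity, then remove it
  have stepA2 : NRel S
      (.comp (.box (am ++ az) (S.tens t (S.id z)) (bn ++ bz)) (.rn (bz ++ bn) (bz ++ bn)))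
      (.box (am ++ az) (S.tens t (S.id z)) (bn ++ bz)) := by
    refine NRel.trans (NRel.comp_congr (NRel.refl _) (NRel.rn_id (bz ++ bn))) ?_
    rw [← hfbn]
    exact NRel.comp_id _
  -- split, swap, and reassemble the tensor
  have stepC : NRel S
      (.box (am ++ az) (S.tens t (S.id z)) (bn ++ bz))
      (.tens (.box am t bn) (.box az (S.id z) bz)) :=
    NRel.nom_tens am bn az bz t (S.id z) hnd1 hndbn
      (h1.trans hd.symm) (h4.trans hc.symm)
      (by rw [S.dom_id]; exact h2) (by rw [S.cod_id]; exact h3)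
  have stepE : NRel S
      (.box (az ++ am) (S.tens (S.id z) t) (bz ++ bn))
      (.tens (.box az (S.id z) bz) (.box am t bn)) :=
    NRel.nom_tens az bz am bn (S.id z) t hndza hnd2
      (by rw [S.dom_id]; exact h2) (by rw [S.cod_id]; exact h3)
      (h1.trans hd.symm) (h4.trans hc.symm)
  -- Step F : peel the symmetry off the right-hand side
  have stepF : NRel S
      (.box (am ++ az) (S.comp (S.sym m z) (S.tens (S.id z) t)) (bz ++ bn))
      (.comp (.rn (am ++ az) (am ++ az)) (.box (az ++ am) (S.tens (S.id z) t) (bz ++ bn))) := by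
    unfold PROP.sym
    exact NRel.nom_prm_left (am ++ az) (am ++ az) (az ++ am) (bz ++ bn)
      (m + z) (blockSwap m z) (S.tens (S.id z) t) ha1 ha2
      hnd1 hnd1 hndza hnd2 ha1 hfa
      (fun i => blockSwap_get am az m z h1 h2 ha1 ha2 i)
      (by rw [S.dom_tens, S.dom_id, hd]; omega)
      (by rw [S.cod_tens, S.cod_id, hc]; exact hb2.trans (by omega))
  have stepF2 : NRel S
      (.comp (.rn (am ++ az) (am ++ az)) (.box (az ++ am) (S.tens (S.id z) t) (bz ++ bn)))
      (.box (az ++ am) (S.tens (S.id z) t) (bz ++ bn)) := by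
    refine NRel.trans (NRel.comp_congr (NRel.rn_id (am ++ az)) (NRel.refl _)) ?_
    rw [hfa]
    simpa only [ntdom] using
      NRel.id_comp (NTm.box (az ++ am) (S.tens (S.id z) t) (bz ++ bn))
  exact (stepA.trans stepA2).trans <| stepC.trans <|
    (NRel.tens_comm _ _).trans <| stepE.symm.trans <| (stepF.trans stepF2).symm
end
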